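/- Fix a dense sequence (s_n) with s_n ∈ p^n (strings over the alphabet {0,...,p-1}). For a fixed i₀, define a hypergraph G on p^{i₀} whose hyperedges are the sets {s_n ⌢ (j) ⌢ c : 0 ≤ j ≤ p-1} for n < i₀ and c ∈ p^{i₀-n-1}. Then G is Berge-acyclic, i.e., the bipartite incidence graph between hyperedges and vertices is acyclic. -/

import Mathlib

private lemma drop_helper {α : Type*} (l c : List α) (j : α) {n N : ℕ}
    (hl : l.length = n) (h : n < N) :
    ((l ++ [j]) ++ c).drop N = c.drop (N - n - 1) := by
  have h2 : (l ++ [j]).length + (N - n - 1) = N := by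
    simp [hl]; omega
  conv_lhs => rw [← h2, List.drop_length_add_append]

private lemma drop_helper' {α : Type*} (l c : List α) (j : α) {n : ℕ}
    (hl : l.length = n) :
    ((l ++ [j]) ++ c).drop n = j :: c := by
  rw [List.append_assoc, List.drop_left' hl]
  rfl

private lemma exists_list_max : ∀ (L : List ℕ), L ≠ [] → ∃ N ∈ L, ∀ m ∈ L, m ≤ N := by
  intro L
  induction L with
  | nil => simp
  | cons a t ih =>
    intro _
    rcases t with _ | ⟨b, t'⟩
    · exact ⟨a, by simp⟩
    · obtain ⟨N, hN, hmax⟩ := ih (by simp)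
      rcases le_total a N with h | h
      · exact ⟨N, by simp [hN], by
          intro m hm
          rcases List.mem_cons.mp hm with rfl | hm
          · exact h
          · exact hmax m hm⟩
      · exact ⟨a, by simp, by
          intro m hm
          rcases List.mem_cons.mp hm with rfl | hm
          · exact le_refl _
          · exact le_trans (hmax m hm) h⟩

private def Qfun (p i₀ N : ℕ) (x : Fin p) (d : List (Fin p)) :
    ({e : ℕ × List (Fin p) // e.1 < i₀ ∧ e.2.length = i₀ - e.1 - 1} ⊕
      {u : List (Fin p) // u.length = i₀}) → Prop
  | Sum.inl e => e.1.1 < N ∧ e.1.2.drop (N - e.1.1 - 1) = x :: d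
  | Sum.inr u => u.1.drop N = x :: d

private lemma aux_inv (p : ℕ) (s : ℕ → List (Fin p))
    (hlen : ∀ n, (s n).length = n) (i₀ : ℕ)
    (G : SimpleGraph ({e : ℕ × List (Fin p) // e.1 < i₀ ∧ e.2.length = i₀ - e.1 - 1} ⊕
      {u : List (Fin p) // u.length = i₀}))
    (hG : ∀ a a', G.Adj a a' ↔
      ∃ (e : {e : ℕ × List (Fin p) // e.1 < i₀ ∧ e.2.length = i₀ - e.1 - 1})
        (u : {u : List (Fin p) // u.length = i₀}),
        (∃ j : Fin p, u.1 = s e.1.1 ++ [j] ++ e.1.2) ∧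
        ((a = Sum.inl e ∧ a' = Sum.inr u) ∨ (a = Sum.inr u ∧ a' = Sum.inl e)))
    (N : ℕ) (x : Fin p) (d : List (Fin p)) :
    ∀ {a b} (W : G.Walk a b),
      (∀ e, Sum.inl e ∈ W.support → e.1.1 ≤ N ∧ ¬(e.1.1 = N ∧ e.1.2 = d)) →
      Qfun p i₀ N x d a → Qfun p i₀ N x d b := by
  intro a b W
  induction W with
  | nil => exact fun _ q => q
  | @cons a a' b h W ih =>
    intro hsup qa
    refine ih (fun e he => hsup e (by simp [SimpleGraph.Walk.support_cons, he])) ?_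
    rw [hG] at h
    obtain ⟨e, u, ⟨j, hj⟩, hor⟩ := h
    rcases hor with ⟨ha, ha'⟩ | ⟨ha, ha'⟩
    · -- a = inl e, a' = inr u
      subst ha; subst ha'
      obtain ⟨hlt, hdrop⟩ := qa
      show u.1.drop N = x :: d
      rw [hj, drop_helper (s e.1.1) e.1.2 j (hlen _) hlt]
      exact hdrop
    · -- a = inr u, a' = inl e
      subst ha; subst ha'
      have qa' : u.1.drop N = x :: d := qa
      obtain ⟨hle, hne⟩ := hsup e (by simp [SimpleGraph.Walk.support_cons])
      rcases lt_or_eq_of_le hle with hlt | heq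
      · refine ⟨hlt, ?_⟩
        rw [← drop_helper (s e.1.1) e.1.2 j (hlen _) hlt, ← hj]
        exact qa'
      · exfalso
        have hd : u.1.drop N = j :: e.1.2 := by
          rw [hj, drop_helper' (s e.1.1) e.1.2 j (by rw [hlen]; exact heq)]
        rw [hd] at qa'
        have : e.1.2 = d := (List.cons.injEq _ _ _ _ ▸ qa').2
        exact hne ⟨heq, this⟩

/-- For a dense sequence `s_n ∈ p^n`, the hypergraph on `p^{i₀}` with hyperedges
`e_{n,c} = {s_n ⌢ (j) ⌢ c : j < p}` (for `n < i₀`, `c ∈ p^{i₀-n-1}`) is Berge-acyclic: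
its bipartite incidence graph between hyperedges and vertices is acyclic. -/
theorem stmt_15 (p : ℕ) (hp : 2 ≤ p) (s : ℕ → List (Fin p))
    (hlen : ∀ n, (s n).length = n)
    (hdense : ∀ t : List (Fin p), ∃ n, (s n).take t.length = t ∧ t.length < n)
    (i₀ : ℕ)
    (G : SimpleGraph ({e : ℕ × List (Fin p) // e.1 < i₀ ∧ e.2.length = i₀ - e.1 - 1} ⊕
      {u : List (Fin p) // u.length = i₀}))
    (hG : ∀ a a', G.Adj a a' ↔
      ∃ (e : {e : ℕ × List (Fin p) // e.1 < i₀ ∧ e.2.length = i₀ - e.1 - 1})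
        (u : {u : List (Fin p) // u.length = i₀}),
        (∃ j : Fin p, u.1 = s e.1.1 ++ [j] ++ e.1.2) ∧
        ((a = Sum.inl e ∧ a' = Sum.inr u) ∨ (a = Sum.inr u ∧ a' = Sum.inl e))) :
    G.IsAcyclic := by
  classical
  intro v W hc
  -- there is an edge-node in the support
  have hinl : ∃ e, Sum.inl e ∈ W.support := by
    cases W with
    | nil => have := hc.three_le_length; simp at this
    | cons h W' =>
      rw [hG] at h
      obtain ⟨e, u, _, hor⟩ := h
      rcases hor with ⟨ha, _⟩ | ⟨_, ha'⟩
      · exact ⟨e, by rw [← ha]; exact SimpleGraph.Walk.start_mem_support _⟩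
      · exact ⟨e, by
          rw [← ha']
          exact (SimpleGraph.Walk.support_cons _ _) ▸
            List.mem_cons_of_mem _ (SimpleGraph.Walk.start_mem_support _)⟩
  obtain ⟨e₀, he₀⟩ := hinl
  -- the list of edge-node indices occurring in the cycle
  set f : ({e : ℕ × List (Fin p) // e.1 < i₀ ∧ e.2.length = i₀ - e.1 - 1} ⊕
      {u : List (Fin p) // u.length = i₀}) → Option ℕ :=
    Sum.elim (fun e => some e.1.1) (fun _ => none) with hf
  set L : List ℕ := W.support.filterMap f with hL
  have hLne : L ≠ [] := by
    have : e₀.1.1 ∈ L := List.mem_filterMap.mpr ⟨Sum.inl e₀, he₀, rfl⟩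
    intro h; rw [h] at this; simp at this
  obtain ⟨N, hNL, hNmax⟩ := exists_list_max L hLne
  obtain ⟨a₁, ha₁mem, ha₁⟩ := List.mem_filterMap.mp hNL
  obtain ⟨e₁, rfl⟩ : ∃ e₁, a₁ = Sum.inl e₁ := by
    cases a₁ with
    | inl e₁ => exact ⟨e₁, rfl⟩
    | inr u => simp [hf] at ha₁
  have hN : e₁.1.1 = N := by simpa [hf] using ha₁
  -- rotate the cycle to start at this maximal edge-node
  have hsub0 : ∀ x, x ∈ (W.rotate _ ha₁mem).support → x ∈ W.support := by
    intro x hx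
    simp only [SimpleGraph.Walk.rotate, SimpleGraph.Walk.mem_support_append_iff] at hx
    rcases hx with hx | hx
    · exact SimpleGraph.Walk.support_dropUntil_subset _ _ hx
    · exact SimpleGraph.Walk.support_takeUntil_subset _ _ hx
  obtain ⟨W', hc', hsub⟩ : ∃ W' : G.Walk (Sum.inl e₁) (Sum.inl e₁),
      W'.IsCycle ∧ ∀ x ∈ W'.support, x ∈ W.support :=
    ⟨W.rotate _ ha₁mem, hc.rotate _, hsub0⟩
  -- maximality transported
  have hmax' : ∀ e, Sum.inl e ∈ W'.support → e.1.1 ≤ N := by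
    intro e he
    exact hNmax _ (List.mem_filterMap.mpr ⟨Sum.inl e, hsub _ he, rfl⟩)
  clear hc ha₁ hNL he₀ hLne hsub0
  cases W' with
  | nil => have := hc'.three_le_length; simp at this
  | cons h₁ W₂ =>
    have hlen3 : 2 ≤ W₂.length := by
      have := hc'.three_le_length
      simp [SimpleGraph.Walk.length_cons] at this
      omega
    -- first neighbor
    rw [hG] at h₁
    obtain ⟨e', u₁, ⟨j₁, hj₁⟩, hor⟩ := h₁
    rcases hor with ⟨ha, ha'⟩ | ⟨ha, _⟩
    swap
    · exact absurd ha (by simp)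
    have he' : e' = e₁ := by injection ha with h'; exact h'.symm
    rw [he'] at hj₁
    subst ha'
    -- last neighbor, via the reverse walk
    obtain ⟨w2, h₂, W₄, hrev⟩ :=
      SimpleGraph.Walk.exists_eq_cons_of_ne (by simp) W₂.reverse
    rw [hG] at h₂
    obtain ⟨e'', u₂, ⟨j₂, hj₂⟩, hor₂⟩ := h₂
    rcases hor₂ with ⟨hb, hb'⟩ | ⟨hb, _⟩
    swap
    · exact absurd hb (by simp)
    have he'' : e'' = e₁ := by injection hb with h'; exact h'.symm
    rw [he''] at hj₂
    subst hb'
    -- support bookkeeping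
    have hnodup : W₂.support.Nodup := by
      have := hc'.support_nodup
      simpa [SimpleGraph.Walk.support_cons] using this
    have hWsup : W₂.support.reverse = Sum.inl e₁ :: W₄.support := by
      rw [← SimpleGraph.Walk.support_reverse, hrev, SimpleGraph.Walk.support_cons]
    have hnodup' : (Sum.inl e₁ :: W₄.support).Nodup := by
      rw [← hWsup]; exact List.nodup_reverse.mpr hnodup
    have he₁notin : Sum.inl e₁ ∉ W₄.support := (List.nodup_cons.mp hnodup').1
    have hW₄nodup : W₄.support.Nodup := (List.nodup_cons.mp hnodup').2
    have hW₄sub : ∀ x, x ∈ W₄.support → x ∈ W₂.support := by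
      intro x hx
      rw [← List.mem_reverse, hWsup]
      exact List.mem_cons_of_mem _ hx
    -- the two neighbors are distinct
    have hune : (Sum.inr u₂ : {e : ℕ × List (Fin p) // e.1 < i₀ ∧ e.2.length = i₀ - e.1 - 1} ⊕ {u : List (Fin p) // u.length = i₀}) ≠ Sum.inr u₁ := by
      intro heq
      cases W₄ with
      | nil =>
        have : W₂.length = 1 := by
          have := congrArg SimpleGraph.Walk.length hrev
          simpa [SimpleGraph.Walk.length_reverse] using this
        omega
      | cons h₅ W₆ =>
        have hend : (Sum.inr u₁ : {e : ℕ × List (Fin p) // e.1 < i₀ ∧ e.2.length = i₀ - e.1 - 1} ⊕ {u : List (Fin p) // u.length = i₀}) ∈ W₆.support :=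
          SimpleGraph.Walk.end_mem_support _
        have hnot : (Sum.inr u₂ : {e : ℕ × List (Fin p) // e.1 < i₀ ∧ e.2.length = i₀ - e.1 - 1} ⊕ {u : List (Fin p) // u.length = i₀}) ∉ W₆.support := by
          have h6 : ((Sum.inr u₂ : {e : ℕ × List (Fin p) // e.1 < i₀ ∧ e.2.length = i₀ - e.1 - 1} ⊕ {u : List (Fin p) // u.length = i₀})
              :: W₆.support).Nodup := by
            simpa [SimpleGraph.Walk.support_cons] using hW₄nodup
          exact (List.nodup_cons.mp h6).1
        rw [heq] at hnot
        exact hnot hend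
    -- apply the invariant to the inner path W₄ : Walk (inr u₂) (inr u₁)
    have hhyp : ∀ e, Sum.inl e ∈ W₄.support →
        e.1.1 ≤ e₁.1.1 ∧ ¬(e.1.1 = e₁.1.1 ∧ e.1.2 = e₁.1.2) := by
      intro e he
      have hmem₂ : Sum.inl e ∈ (SimpleGraph.Walk.cons h₁ W₂).support := by
        rw [SimpleGraph.Walk.support_cons]
        exact List.mem_cons_of_mem _ (hW₄sub _ he)
      constructor
      · rw [hN]; exact hmax' e hmem₂
      · rintro ⟨h1, h2⟩
        have : e = e₁ := Subtype.ext (Prod.ext h1 h2)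
        exact he₁notin (this ▸ he)
    have q₂ : Qfun p i₀ e₁.1.1 j₂ e₁.1.2 (Sum.inr u₂) := by
      show u₂.1.drop e₁.1.1 = j₂ :: e₁.1.2
      rw [hj₂, drop_helper' (s e₁.1.1) e₁.1.2 j₂ (hlen _)]
    have q₁ : u₁.1.drop e₁.1.1 = j₂ :: e₁.1.2 :=
      aux_inv p s hlen i₀ G hG e₁.1.1 j₂ e₁.1.2 W₄ hhyp q₂
    have q₁' : u₁.1.drop e₁.1.1 = j₁ :: e₁.1.2 := by
      rw [hj₁, drop_helper' (s e₁.1.1) e₁.1.2 j₁ (hlen _)]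
    have hj : j₁ = j₂ := by
      have := q₁'.symm.trans q₁
      exact (List.cons.injEq _ _ _ _ ▸ this).1
    apply hune
    have : u₂ = u₁ := Subtype.ext (by rw [hj₁, hj₂, hj])
    rw [this]
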